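/- (Third Picard–Fuchs relation.) For every h > 0 one has (4h + 1)·I'_4(h) = 4h·I_0(h) + 5·I_2(h). -/

import Mathlib

open Real Set Filter intervalIntegral

/-- Right endpoint of the exterior oval: `x_max(h) = √(1 + √(1+4h))`. -/
noncomputable def xmax (h : ℝ) : ℝ := Real.sqrt (1 + Real.sqrt (1 + 4*h))

/-- Complete elliptic integral `I_i(h) = ∫_{-x_max}^{x_max} x^i √(2h + x² - x⁴/2) dx`. -/
noncomputable def ellI (i : ℕ) (h : ℝ) : ℝ :=
  ∫ x in (-xmax h)..(xmax h), x^i * Real.sqrt (2*h + x^2 - x^4/2)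

/-- Complete elliptic integral `I'_i(h) = ∫_{-x_max}^{x_max} x^i (2h + x² - x⁴/2)^{-1/2} dx`. -/
noncomputable def ellI' (i : ℕ) (h : ℝ) : ℝ :=
  ∫ x in (-xmax h)..(xmax h), x^i / Real.sqrt (2*h + x^2 - x^4/2)

/-- Comparison with `(b-x)^{-1/2}` gives interval integrability. -/
lemma sqrt_comparison {a b c C : ℝ} (hc : 0 < c) (hab : a ≤ b) {f : ℝ → ℝ}
    (hmeas : Measurable f)
    (hbd : ∀ x ∈ Set.Ioc a b, ‖f x‖ ≤ C / Real.sqrt (c * (b - x))) :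
    IntervalIntegrable f MeasureTheory.volume a b := by
  have base : IntervalIntegrable (fun x : ℝ => x ^ (-(1/2) : ℝ)) MeasureTheory.volume 0 (b - a) :=
    intervalIntegrable_rpow' (by norm_num)
  have g1 : IntervalIntegrable (fun x : ℝ => (b - x) ^ (-(1/2) : ℝ))
      MeasureTheory.volume a b := by
    have := (base.comp_sub_left b).symm
    simpa using this
  have g2 : IntervalIntegrable (fun x : ℝ => (C / Real.sqrt c) * (b - x) ^ (-(1/2):ℝ))
      MeasureTheory.volume a b := g1.const_mul _
  refine g2.mono_fun hmeas.aestronglyMeasurable ?_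
  filter_upwards [MeasureTheory.ae_restrict_mem measurableSet_uIoc] with x hx
  rw [Set.uIoc_of_le hab] at hx
  have hb := hbd x hx
  have hbx : 0 ≤ b - x := by linarith [hx.2]
  calc ‖f x‖ ≤ C / Real.sqrt (c * (b - x)) := hb
    _ = (C / Real.sqrt c) * (b - x) ^ (-(1/2):ℝ) := by
        rw [Real.sqrt_mul hc.le, Real.rpow_neg hbx, ← Real.sqrt_eq_rpow]
        simp [div_eq_mul_inv, mul_inv]; ring
    _ ≤ ‖(C / Real.sqrt c) * (b - x) ^ (-(1/2):ℝ)‖ := le_abs_self _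

lemma key_integrable (h : ℝ) (hh : 0 < h) (i : ℕ) (hi : Even i) :
    IntervalIntegrable (fun x => x^i / Real.sqrt (2*h + x^2 - x^4/2))
      MeasureTheory.volume (-(xmax h)) (xmax h) := by
  set s := Real.sqrt (1 + 4*h) with hs
  set m := xmax h with hmdef
  have hs0 : (0:ℝ) ≤ 1 + 4*h := by linarith
  have hs2 : s^2 = 1 + 4*h := Real.sq_sqrt hs0
  have hs1 : 1 < s := by nlinarith [Real.sqrt_nonneg (1 + 4*h)]
  have hm2 : m^2 = 1 + s := Real.sq_sqrt (by nlinarith [Real.sqrt_nonneg (1 + 4*h)])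
  have hm0 : 0 < m := Real.sqrt_pos.mpr (by nlinarith [Real.sqrt_nonneg (1 + 4*h)])
  have hfac : ∀ x : ℝ, 2*h + x^2 - x^4/2 = (m^2 - x^2)*(x^2 + (s-1))/2 := by
    intro x
    have := hm2; have := hs2; nlinarith [hm2, hs2]
  have hPc : Continuous fun x : ℝ => 2*h + x^2 - x^4/2 := by continuity
  have hmeas : Measurable fun x : ℝ => x^i / Real.sqrt (2*h + x^2 - x^4/2) :=
    (measurable_id.pow_const i).div (Real.continuous_sqrt.comp hPc).measurable
  have hPm : 2*h + m^2 - m^4/2 = 0 := by rw [hfac m]; ring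
  have hc : 0 < m*(s-1)/2 := by nlinarith
  have half1 : IntervalIntegrable (fun x => x^i / Real.sqrt (2*h + x^2 - x^4/2))
      MeasureTheory.volume 0 m := by
    apply sqrt_comparison (C := m^i) hc hm0.le hmeas
    intro x hx
    have hx0 : 0 < x := hx.1
    have hxm : x ≤ m := hx.2
    have hPbd : (m*(s-1)/2) * (m - x) ≤ 2*h + x^2 - x^4/2 := by
      have key : m*(s-1) ≤ (m+x)*(x^2+(s-1)) :=
        mul_le_mul (by linarith) (by nlinarith [sq_nonneg x]) (by linarith) (by linarith)
      have key2 : (m-x) * (m*(s-1)) ≤ (m-x) * ((m+x)*(x^2+(s-1))) :=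
        mul_le_mul_of_nonneg_left key (by linarith)
      rw [hfac x]; nlinarith [key2]
    rcases eq_or_lt_of_le hxm with rfl | hlt
    · simp [hPm]
    · have hc2 : 0 < (m*(s-1)/2) * (m - x) := mul_pos hc (by linarith)
      have hPx : 0 < 2*h + x^2 - x^4/2 := lt_of_lt_of_le hc2 hPbd
      have : ‖x^i / Real.sqrt (2*h + x^2 - x^4/2)‖
          = x^i / Real.sqrt (2*h + x^2 - x^4/2) :=
        abs_of_nonneg (div_nonneg (pow_nonneg hx0.le _) (Real.sqrt_nonneg _))
      rw [this]
      exact div_le_div₀ (pow_nonneg hm0.le _) (pow_le_pow_left₀ hx0.le hxm i)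
        (Real.sqrt_pos.mpr hc2) (Real.sqrt_le_sqrt hPbd)
  have half2 : IntervalIntegrable (fun x => x^i / Real.sqrt (2*h + x^2 - x^4/2))
      MeasureTheory.volume (-m) 0 := by
    have h2 := (half1.comp_sub_left 0).symm
    have e : (fun x : ℝ => (0 - x)^i / Real.sqrt (2*h + (0-x)^2 - (0-x)^4/2))
        = fun x : ℝ => x^i / Real.sqrt (2*h + x^2 - x^4/2) := by
      funext x
      rw [zero_sub, hi.neg_pow]
      ring_nf
    rw [e] at h2
    simpa using h2
  exact half2.trans half1

set_option maxHeartbeats 1000000 in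
theorem picard_fuchs_three (h : ℝ) (hh : 0 < h) :
    (4*h + 1) * ellI' 4 h = 4*h * ellI 0 h + 5 * ellI 2 h := by
  set s := Real.sqrt (1 + 4*h) with hs
  set m := xmax h with hmdef
  have hs0 : (0:ℝ) ≤ 1 + 4*h := by linarith
  have hs2 : s^2 = 1 + 4*h := Real.sq_sqrt hs0
  have hs1 : 1 < s := by nlinarith [Real.sqrt_nonneg (1 + 4*h)]
  have hm2 : m^2 = 1 + s := Real.sq_sqrt (by nlinarith [Real.sqrt_nonneg (1 + 4*h)])
  have hm0 : 0 < m := Real.sqrt_pos.mpr (by nlinarith [Real.sqrt_nonneg (1 + 4*h)])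
  have hfac : ∀ x : ℝ, 2*h + x^2 - x^4/2 = (m^2 - x^2)*(x^2 + (s-1))/2 := by
    intro x; nlinarith [hm2, hs2]
  have hPc : Continuous fun x : ℝ => 2*h + x^2 - x^4/2 := by continuity
  have hsqc : Continuous fun x : ℝ => Real.sqrt (2*h + x^2 - x^4/2) :=
    Real.continuous_sqrt.comp hPc
  have hPm : 2*h + m^2 - m^4/2 = 0 := by rw [hfac m]; ring
  have hPnegm : 2*h + (-m)^2 - (-m)^4/2 = 0 := by rw [hfac (-m)]; ring
  have hPpos : ∀ x ∈ Set.Ioo (-m) m, 0 < 2*h + x^2 - x^4/2 := by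
    intro x hx
    rw [hfac x]
    have h1 : x^2 < m^2 := by
      have := abs_lt.mpr ⟨hx.1, hx.2⟩
      nlinarith [abs_nonneg x, sq_abs x]
    have h2 : 0 < x^2 + (s-1) := by nlinarith [sq_nonneg x]
    have h3 : 0 < (m^2 - x^2)*(x^2 + (s-1)) := mul_pos (by linarith) h2
    linarith
  have hderivP : ∀ x : ℝ, HasDerivAt (fun x : ℝ => 2*h + x^2 - x^4/2) (2*x - 2*x^3) x := by
    intro x
    have h1 : HasDerivAt (fun x : ℝ => x^2) (2*x) x := by simpa using hasDerivAt_pow 2 x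
    have h2 : HasDerivAt (fun x : ℝ => x^4) (4*x^3) x := by simpa using hasDerivAt_pow 4 x
    have this : HasDerivAt (fun y : ℝ => 2*h + y^2 - y^4/2) _ x := (h1.const_add (2*h)).sub (h2.div_const 2)
    convert this using 1
    ring
  have hmm : -m ≤ m := by linarith
  have hI2 := key_integrable h hh 2 ⟨1, rfl⟩
  have hI4 := key_integrable h hh 4 ⟨2, rfl⟩
  rw [← hmdef] at hI2 hI4
  -- First identity: I_0 + I'_2 - I'_4 = 0
  have eq1 : ellI 0 h + ellI' 2 h - ellI' 4 h = 0 := by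
    have hcont1 : ContinuousOn (fun x : ℝ => x * Real.sqrt (2*h + x^2 - x^4/2))
        (Set.Icc (-m) m) := (continuous_id.mul hsqc).continuousOn
    have hderiv1 : ∀ x ∈ Set.Ioo (-m) m,
        HasDerivAt (fun x : ℝ => x * Real.sqrt (2*h + x^2 - x^4/2))
          (Real.sqrt (2*h + x^2 - x^4/2)
            + (x^2 - x^4) / Real.sqrt (2*h + x^2 - x^4/2)) x := by
      intro x hx
      have hPx := hPpos x hx
      have hsq : Real.sqrt (2*h + x^2 - x^4/2) ≠ 0 := Real.sqrt_ne_zero'.mpr hPx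
      have hds := (hderivP x).sqrt hPx.ne'
      have this : HasDerivAt (fun y : ℝ => y * Real.sqrt (2*h + y^2 - y^4/2)) _ x := (hasDerivAt_id x).mul hds
      convert this using 1
      simp only [id]
      field_simp
    have hint1 : IntervalIntegrable
        (fun x : ℝ => Real.sqrt (2*h + x^2 - x^4/2)
          + (x^2 - x^4) / Real.sqrt (2*h + x^2 - x^4/2)) MeasureTheory.volume (-m) m := by
      simp only [sub_div]
      exact (hsqc.intervalIntegrable _ _).add (hI2.sub hI4)
    have ftc := integral_eq_sub_of_hasDerivAt_of_le hmm hcont1 hderiv1 hint1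
    rw [hPm, hPnegm] at ftc
    simp only [Real.sqrt_zero, mul_zero, sub_zero] at ftc
    have split : (∫ x in (-m)..m, (Real.sqrt (2*h + x^2 - x^4/2)
          + (x^2 - x^4) / Real.sqrt (2*h + x^2 - x^4/2)))
        = (∫ x in (-m)..m, Real.sqrt (2*h + x^2 - x^4/2))
          + ((∫ x in (-m)..m, x^2 / Real.sqrt (2*h + x^2 - x^4/2))
             - ∫ x in (-m)..m, x^4 / Real.sqrt (2*h + x^2 - x^4/2)) := by
      rw [← integral_sub hI2 hI4, ← integral_add (hsqc.intervalIntegrable _ _) (hI2.sub hI4)]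
      congr 1
      funext x
      rw [sub_div]
    rw [split] at ftc
    have e0 : ellI 0 h = ∫ x in (-m)..m, Real.sqrt (2*h + x^2 - x^4/2) := by
      simp [ellI, hmdef]
    have e2 : ellI' 2 h = ∫ x in (-m)..m, x^2 / Real.sqrt (2*h + x^2 - x^4/2) := by
      rw [ellI', ← hmdef]
    have e4 : ellI' 4 h = ∫ x in (-m)..m, x^4 / Real.sqrt (2*h + x^2 - x^4/2) := by
      rw [ellI', ← hmdef]
    rw [e0, e2, e4]
    linarith [ftc]
  -- Second identity: 5 I_2 - 4h I'_2 - I'_4 = 0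
  have eq3 : 5 * ellI 2 h - 4*h * ellI' 2 h - ellI' 4 h = 0 := by
    have hcont3 : ContinuousOn (fun x : ℝ => x^3 * Real.sqrt (2*h + x^2 - x^4/2))
        (Set.Icc (-m) m) := ((continuous_pow 3).mul hsqc).continuousOn
    have hderiv3 : ∀ x ∈ Set.Ioo (-m) m,
        HasDerivAt (fun x : ℝ => x^3 * Real.sqrt (2*h + x^2 - x^4/2))
          (5 * (x^2 * Real.sqrt (2*h + x^2 - x^4/2))
            - 4*h * (x^2 / Real.sqrt (2*h + x^2 - x^4/2))
            - x^4 / Real.sqrt (2*h + x^2 - x^4/2)) x := by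
      intro x hx
      have hPx := hPpos x hx
      have hsq : Real.sqrt (2*h + x^2 - x^4/2) ≠ 0 := Real.sqrt_ne_zero'.mpr hPx
      have ht2 : Real.sqrt (2*h + x^2 - x^4/2)^2 = 2*h + x^2 - x^4/2 := Real.sq_sqrt hPx.le
      have hds := (hderivP x).sqrt hPx.ne'
      have this : HasDerivAt (fun y : ℝ => y^3 * Real.sqrt (2*h + y^2 - y^4/2)) _ x := (hasDerivAt_pow 3 x).mul hds
      convert this using 1
      set t := Real.sqrt (2*h + x^2 - x^4/2) with htdef
      push_cast
      field_simp
      linear_combination (2*x^2) * ht2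
    have hint3 : IntervalIntegrable
        (fun x : ℝ => 5 * (x^2 * Real.sqrt (2*h + x^2 - x^4/2))
            - 4*h * (x^2 / Real.sqrt (2*h + x^2 - x^4/2))
            - x^4 / Real.sqrt (2*h + x^2 - x^4/2)) MeasureTheory.volume (-m) m := by
      have hc2 : IntervalIntegrable (fun x : ℝ => x^2 * Real.sqrt (2*h + x^2 - x^4/2))
          MeasureTheory.volume (-m) m := ((continuous_pow 2).mul hsqc).intervalIntegrable _ _
      exact ((hc2.const_mul 5).sub (hI2.const_mul (4*h))).sub hI4
    have ftc := integral_eq_sub_of_hasDerivAt_of_le hmm hcont3 hderiv3 hint3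
    rw [hPm, hPnegm] at ftc
    simp only [Real.sqrt_zero, mul_zero, sub_zero] at ftc
    have hc2 : IntervalIntegrable (fun x : ℝ => x^2 * Real.sqrt (2*h + x^2 - x^4/2))
        MeasureTheory.volume (-m) m := ((continuous_pow 2).mul hsqc).intervalIntegrable _ _
    rw [integral_sub ((hc2.const_mul 5).sub (hI2.const_mul (4*h))) hI4,
        integral_sub (hc2.const_mul 5) (hI2.const_mul (4*h)),
        integral_const_mul, integral_const_mul] at ftc
    have e2' : ellI 2 h = ∫ x in (-m)..m, x^2 * Real.sqrt (2*h + x^2 - x^4/2) := by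
      rw [ellI, ← hmdef]
    have e2 : ellI' 2 h = ∫ x in (-m)..m, x^2 / Real.sqrt (2*h + x^2 - x^4/2) := by
      rw [ellI', ← hmdef]
    have e4 : ellI' 4 h = ∫ x in (-m)..m, x^4 / Real.sqrt (2*h + x^2 - x^4/2) := by
      rw [ellI', ← hmdef]
    rw [e2', e2, e4]
    linarith [ftc]
  linear_combination (-(4*h))*eq1 - eq3
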